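/- Let U : H → K be a contraction between Hilbert spaces and C : H → K a bounded operator with C = U|C|. Then U*C = |C|. -/

import Mathlib

open scoped ComplexOrder
open ContinuousLinearMap (adjoint)

variable {H K : Type*} [NormedAddCommGroup H] [InnerProductSpace ℂ H] [CompleteSpace H]
  [NormedAddCommGroup K] [InnerProductSpace ℂ K] [CompleteSpace K]
theorem adjoint_contraction_polar (U C : H →L[ℂ] K) (hU : ‖U‖ ≤ 1)
    (hC : C = U ∘L CFC.sqrt (adjoint C ∘L C)) :
    adjoint U ∘L C = CFC.sqrt (adjoint C ∘L C) := by
  set P : H →L[ℂ] H := CFC.sqrt (adjoint C ∘L C) with hPdef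
  have hCC : (0 : H →L[ℂ] H) ≤ adjoint C ∘L C := by
    rw [ContinuousLinearMap.nonneg_iff_isPositive]
    have h := ContinuousLinearMap.isPositive_one.adjoint_conj C
    rwa [show (1 : K →L[ℂ] K) ∘L C = C from ContinuousLinearMap.id_comp C] at h
  have hP0 : (0 : H →L[ℂ] H) ≤ P := by rw [hPdef]; exact CFC.sqrt_nonneg _
  have hPsa : IsSelfAdjoint P := hP0.isSelfAdjoint
  have hP2 : P * P = adjoint C ∘L C := by
    rw [← sq]; exact CFC.sq_sqrt _ hCC
  set A : H →L[ℂ] H := 1 - adjoint U ∘L U with hAdef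
  have hAsa : IsSelfAdjoint A := by
    refine (IsSelfAdjoint.one _).sub ?_
    rw [isSelfAdjoint_iff, ContinuousLinearMap.star_eq_adjoint,
      ContinuousLinearMap.adjoint_comp, ContinuousLinearMap.adjoint_adjoint]
  have hA0 : (0 : H →L[ℂ] H) ≤ A := by
    rw [ContinuousLinearMap.nonneg_iff_isPositive]
    refine ⟨ContinuousLinearMap.isSelfAdjoint_iff_isSymmetric.mp hAsa, fun x => ?_⟩
    have hnorm : ‖U x‖ ≤ ‖x‖ := by
      calc ‖U x‖ ≤ ‖U‖ * ‖x‖ := U.le_opNorm x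
        _ ≤ 1 * ‖x‖ := by gcongr
        _ = ‖x‖ := one_mul _
    have : (A x : H) = x - adjoint U (U x) := by simp [hAdef]
    rw [ContinuousLinearMap.reApplyInnerSelf, this, inner_sub_left,
      ContinuousLinearMap.adjoint_inner_left, map_sub]
    have h1 : RCLike.re (inner ℂ x x : ℂ) = ‖x‖ ^ 2 := by
      rw [← inner_self_eq_norm_sq (𝕜 := ℂ)]
    have h2 : RCLike.re (inner ℂ (U x) (U x) : ℂ) = ‖U x‖ ^ 2 := by
      rw [← inner_self_eq_norm_sq (𝕜 := ℂ)]
    rw [h1, h2, sub_nonneg]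
    exact pow_le_pow_left₀ (norm_nonneg _) hnorm 2
  set S : H →L[ℂ] H := CFC.sqrt A with hSdef
  have hS0 : (0 : H →L[ℂ] H) ≤ S := by rw [hSdef]; exact CFC.sqrt_nonneg _
  have hSsa : IsSelfAdjoint S := hS0.isSelfAdjoint
  have hS2 : S * S = A := by rw [← sq]; exact CFC.sq_sqrt _ hA0
  -- key pointwise facts
  have hCP : ∀ x, C x = U (P x) := fun x => by
    conv_lhs => rw [hC]
    rfl
  have hnormCP : ∀ x, (inner ℂ (C x) (C x) : ℂ) = inner ℂ (P x) (P x) := by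
    intro x
    rw [← ContinuousLinearMap.adjoint_inner_left C]
    have : adjoint C (C x) = P (P x) := by
      rw [← ContinuousLinearMap.comp_apply, ← hP2]; rfl
    rw [this]
    exact (ContinuousLinearMap.isSelfAdjoint_iff_isSymmetric.mp hPsa) (P x) x
  have hSP : ∀ x, S (P x) = 0 := by
    intro x
    rw [← inner_self_eq_zero (𝕜 := ℂ)]
    have h1 : (inner ℂ (S (P x)) (S (P x)) : ℂ) = inner ℂ (S (S (P x))) (P x) :=
      ((ContinuousLinearMap.isSelfAdjoint_iff_isSymmetric.mp hSsa) (S (P x)) (P x)).symm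
    have h2 : S (S (P x)) = A (P x) := by
      rw [← ContinuousLinearMap.mul_apply, hS2]
    have h3 : A (P x) = P x - adjoint U (U (P x)) := by simp [hAdef]
    rw [h1, h2, h3, inner_sub_left, ContinuousLinearMap.adjoint_inner_left,
      ← hCP, hnormCP, sub_self]
  have hAP : ∀ x, A (P x) = 0 := by
    intro x
    have := hSP x
    calc A (P x) = (S * S) (P x) := by rw [hS2]
      _ = S (S (P x)) := rfl
      _ = 0 := by rw [this, map_zero]
  ext x
  have := hAP x
  have h3 : A (P x) = P x - adjoint U (U (P x)) := by simp [hAdef]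
  rw [h3, sub_eq_zero] at this
  simp only [ContinuousLinearMap.comp_apply]
  rw [hCP x, ← this]
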